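/- Let λ₁ ≥ 0, ν ≥ 0 and ρ > 0 be real numbers, let C ≥ 1, D ≥ 0 and 0 < τ ≤ 1. Let R : ℕ → [0, ∞) satisfy R(0) = 0 and R(l) − R(k) ≥ l − k for all naturals k ≤ l. Let (e_{l,k})_{l ≤ k}, (q_l)_{l ≥ 0}, (z_l)_{l ≥ 0}, (s_l)_{l ≥ 0} be nonnegative reals with e_{l,k} ≤ C·exp((−ν+τ)·(R(k) − R(l))) for all l ≤ k, q_l ≤ C·exp((λ₁+τ)·l), z_l ≤ C·exp(τ·l) and s_l ≤ D·exp(−ρ·R(l+1)) for all l. Then there is a constant C' > 0, depending only on C and τ, such that for every k ≥ 1, Σ_{0 ≤ l < k} e_{l+1,k}·(q_{l+1})^τ·z_{l+1}·s_l ≤ C'·D·exp((max{−ρ, −ν} + (λ₁+3)·τ)·R(k)). -/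

import Mathlib

open Real

/-- Proposition 3.7 of the paper (bound for the Diophantine series `W`),
with the FFDC bounds taken as explicit hypotheses; the constant `C'`
depends only on `C` and `tau`. -/
theorem stmt_1 (C tau : ℝ) (hC : 1 ≤ C) (htau0 : 0 < tau) (htau1 : tau ≤ 1) :
    ∃ C' > 0, ∀ (lam1 nu rho D : ℝ), 0 ≤ lam1 → 0 ≤ nu → 0 < rho → 0 ≤ D →
      ∀ (R : ℕ → ℝ) (e : ℕ → ℕ → ℝ) (q z s : ℕ → ℝ),
      (∀ k, 0 ≤ R k) → R 0 = 0 →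
      (∀ k l : ℕ, k ≤ l → (l : ℝ) - (k : ℝ) ≤ R l - R k) →
      (∀ l k, l ≤ k → 0 ≤ e l k) → (∀ l, 0 ≤ q l) → (∀ l, 0 ≤ z l) →
      (∀ l, 0 ≤ s l) →
      (∀ l k, l ≤ k → e l k ≤ C * exp ((-nu + tau) * (R k - R l))) →
      (∀ l, q l ≤ C * exp ((lam1 + tau) * l)) →
      (∀ l, z l ≤ C * exp (tau * l)) →
      (∀ l, s l ≤ D * exp (-rho * R (l + 1))) →
      ∀ k : ℕ, 1 ≤ k →
        ∑ l ∈ Finset.range k, e (l + 1) k * (q (l + 1)) ^ tau * z (l + 1) * s l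
          ≤ C' * D * exp ((max (-rho) (-nu) + (lam1 + 3) * tau) * R k) := by
  have hCpos : (0:ℝ) < C := lt_of_lt_of_le one_pos hC
  refine ⟨C ^ 3 / tau, by positivity, ?_⟩
  intro lam1 nu rho D hlam1 hnu hrho hD R e q z s hR0 hRzero hgap he0 hq0 hz0 hs0
    heb hqb hzb hsb k hk
  set m := max (-rho) (-nu) with hm
  have hmnu : -nu ≤ m := le_max_right _ _
  have hmrho : -rho ≤ m := le_max_left _ _
  set b := R k with hb
  have hRmono : ∀ a c : ℕ, a ≤ c → R a ≤ R c := by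
    intro a c hac
    have h1 := hgap a c hac
    have h2 : (0:ℝ) ≤ (c:ℝ) - a := by
      have := (Nat.cast_le (α := ℝ)).mpr hac
      linarith
    linarith
  have hlkR : ∀ l : ℕ, (l:ℝ) ≤ R l := by
    intro l
    have := hgap 0 l (Nat.zero_le l)
    simp [hRzero] at this
    simpa using this
  have hb0 : 0 ≤ b := hR0 k
  -- the per-term bound
  have hterm : ∀ l ∈ Finset.range k,
      e (l + 1) k * (q (l + 1)) ^ tau * z (l + 1) * s l
        ≤ C ^ 3 * D * exp ((m + (lam1 + 2) * tau) * b) := by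
    intro l hl
    have hlk : l + 1 ≤ k := Finset.mem_range.mp hl
    set a := R (l + 1) with ha
    have hab : a ≤ b := hRmono _ _ hlk
    have hla : ((l:ℝ) + 1) ≤ a := by
      have := hlkR (l + 1)
      push_cast at this
      linarith
    have hl0 : (0:ℝ) ≤ (l:ℝ) + 1 := by positivity
    have ha0 : 0 ≤ a := le_trans hl0 hla
    -- factor bounds
    have h1 : e (l + 1) k ≤ C * exp ((-nu + tau) * (b - a)) := heb _ _ hlk
    have h2 : (q (l + 1)) ^ tau
        ≤ C ^ tau * exp ((lam1 + tau) * ((l:ℝ) + 1) * tau) := by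
      have hq := hqb (l + 1)
      push_cast at hq
      calc (q (l + 1)) ^ tau
          ≤ (C * exp ((lam1 + tau) * ((l:ℝ) + 1))) ^ tau :=
            Real.rpow_le_rpow (hq0 _) hq htau0.le
        _ = C ^ tau * exp ((lam1 + tau) * ((l:ℝ) + 1) * tau) := by
            rw [Real.mul_rpow hCpos.le (exp_pos _).le, ← Real.exp_mul]
    have h3 : z (l + 1) ≤ C * exp (tau * ((l:ℝ) + 1)) := by
      have := hzb (l + 1); push_cast at this; exact this
    have h4 : s l ≤ D * exp (-rho * a) := hsb l
    have hq0' : 0 ≤ (q (l + 1)) ^ tau := Real.rpow_nonneg (hq0 _) _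
    have hCt : C ^ tau ≤ C := by
      calc C ^ tau ≤ C ^ (1:ℝ) := Real.rpow_le_rpow_of_exponent_le hC htau1
        _ = C := Real.rpow_one C
    have hCt0 : 0 ≤ C ^ tau := Real.rpow_nonneg hCpos.le _
    -- multiply the four bounds
    have hprod : e (l + 1) k * (q (l + 1)) ^ tau * z (l + 1) * s l
        ≤ (C * exp ((-nu + tau) * (b - a)))
          * (C ^ tau * exp ((lam1 + tau) * ((l:ℝ) + 1) * tau))
          * (C * exp (tau * ((l:ℝ) + 1)))
          * (D * exp (-rho * a)) := by
      apply mul_le_mul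
      · apply mul_le_mul
        · apply mul_le_mul h1 h2 hq0' (by positivity)
        · exact h3
        · exact hz0 _
        · positivity
      · exact h4
      · exact hs0 _
      · positivity
    have hexp : (-nu + tau) * (b - a) + (lam1 + tau) * ((l:ℝ) + 1) * tau
          + tau * ((l:ℝ) + 1) + (-rho) * a ≤ (m + (lam1 + 2) * tau) * b := by
      have f1 : -nu * (b - a) ≤ m * (b - a) :=
        mul_le_mul_of_nonneg_right hmnu (by linarith)
      have f2 : -rho * a ≤ m * a := mul_le_mul_of_nonneg_right hmrho ha0
      have f3 : tau * ((l:ℝ) + 1) ≤ tau * a :=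
        mul_le_mul_of_nonneg_left hla htau0.le
      have f4 : (lam1 + tau) * (tau * ((l:ℝ) + 1)) ≤ (lam1 + 1) * (tau * b) := by
        apply mul_le_mul (by linarith)
          (mul_le_mul_of_nonneg_left (le_trans hla hab) htau0.le)
          (by positivity) (by linarith)
      nlinarith [f1, f2, f3, f4]
    calc e (l + 1) k * (q (l + 1)) ^ tau * z (l + 1) * s l
        ≤ (C * exp ((-nu + tau) * (b - a)))
          * (C ^ tau * exp ((lam1 + tau) * ((l:ℝ) + 1) * tau))
          * (C * exp (tau * ((l:ℝ) + 1)))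
          * (D * exp (-rho * a)) := hprod
      _ = (C * C ^ tau * C) * D
          * exp ((-nu + tau) * (b - a) + (lam1 + tau) * ((l:ℝ) + 1) * tau
              + tau * ((l:ℝ) + 1) + (-rho) * a) := by
          rw [Real.exp_add, Real.exp_add, Real.exp_add]; ring
      _ ≤ C ^ 3 * D * exp ((m + (lam1 + 2) * tau) * b) := by
          apply mul_le_mul
          · apply mul_le_mul_of_nonneg_right _ hD
            nlinarith [mul_nonneg (mul_nonneg hCpos.le hCpos.le)
              (sub_nonneg.mpr hCt)]
          · exact Real.exp_le_exp.mpr hexp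
          · positivity
          · positivity
    -- end per-term bound
  have hsum : ∑ l ∈ Finset.range k, e (l + 1) k * (q (l + 1)) ^ tau * z (l + 1) * s l
      ≤ (k:ℝ) * (C ^ 3 * D * exp ((m + (lam1 + 2) * tau) * b)) := by
    calc ∑ l ∈ Finset.range k, e (l + 1) k * (q (l + 1)) ^ tau * z (l + 1) * s l
        ≤ ∑ _l ∈ Finset.range k, C ^ 3 * D * exp ((m + (lam1 + 2) * tau) * b) :=
          Finset.sum_le_sum hterm
      _ = (k:ℝ) * (C ^ 3 * D * exp ((m + (lam1 + 2) * tau) * b)) := by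
          rw [Finset.sum_const, Finset.card_range, nsmul_eq_mul]
  have hkb : (k:ℝ) ≤ exp (tau * b) / tau := by
    have h1 : (k:ℝ) ≤ b := hlkR k
    have h2 : tau * b ≤ exp (tau * b) := by
      linarith [Real.add_one_le_exp (tau * b)]
    rw [le_div_iff₀ htau0]
    nlinarith
  calc ∑ l ∈ Finset.range k, e (l + 1) k * (q (l + 1)) ^ tau * z (l + 1) * s l
      ≤ (k:ℝ) * (C ^ 3 * D * exp ((m + (lam1 + 2) * tau) * b)) := hsum
    _ ≤ (exp (tau * b) / tau) * (C ^ 3 * D * exp ((m + (lam1 + 2) * tau) * b)) := by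
        apply mul_le_mul_of_nonneg_right hkb (by positivity)
    _ = C ^ 3 / tau * D * exp (tau * b + (m + (lam1 + 2) * tau) * b) := by
        rw [Real.exp_add]; ring
    _ = C ^ 3 / tau * D * exp ((m + (lam1 + 3) * tau) * b) := by
        ring_nf
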